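/- arXiv:1608.07902 — 3 statements merged into one kernel-verified Lean document; each statement's English description precedes it below -/
import Mathlib

section
/- Let T > 0, let a : ℝ → ℝ be continuous and T-periodic, and let b, d : ℝ → ℝ be continuous, T-periodic, and everywhere positive. Then the scalar ODE u'(t) = u(t)(a(t) − b(t) u(t)) + d(t) has exactly one T-periodic solution u* with u*(t) > 0 for all t ∈ ℝ; moreover, for every solution u : [0,∞) → ℝ of this ODE with u(0) ≥ 0, one has u(t) − u*(t) → 0 as t → ∞. -/
open Filter Topology Set


/-- Barrier lemma: if whenever `u t = c` the derivative is negative, and `u t₀ ≤ c`,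
then `u ≤ c` on `[t₀, t₁]`. -/
lemma stay_le {u g : ℝ → ℝ} {t₀ t₁ c : ℝ}
    (hu : ∀ t ∈ Set.Icc t₀ t₁, HasDerivWithinAt u (g t) (Set.Icc t₀ t₁) t)
    (hbar : ∀ t ∈ Set.Icc t₀ t₁, u t = c → g t < 0)
    (h0 : u t₀ ≤ c) : ∀ t ∈ Set.Icc t₀ t₁, u t ≤ c := by
  rcases le_or_gt t₀ t₁ with h01 | h01
  swap
  · intro t ht; exact absurd (ht.1.trans ht.2) (not_le.mpr h01)
  have hcont : ContinuousOn u (Set.Icc t₀ t₁) := fun t ht => (hu t ht).continuousWithinAt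
  have hclosed : IsClosed ({t | u t ≤ c} ∩ Set.Icc t₀ t₁) := by
    have := hcont.preimage_isClosed_of_isClosed isClosed_Icc (isClosed_Iic (a := c))
    rwa [Set.inter_comm] at this
  intro t ht
  refine hclosed.Icc_subset_of_forall_exists_gt h0 ?_ ht
  intro x hx y hy
  have hxI : x ∈ Set.Icc t₀ t₁ := ⟨hx.2.1, hx.2.2.le⟩
  have hxm : x < min t₁ y := lt_min hx.2.2 hy
  have hsub : Set.Ioc x (min t₁ y) ⊆ Set.Icc t₀ t₁ :=
    fun z hz => ⟨hx.2.1.trans hz.1.le, hz.2.trans (min_le_left _ _)⟩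
  haveI : (𝓝[Set.Ioc x (min t₁ y)] x).NeBot := by
    rw [nhdsWithin_Ioc_eq_nhdsGT hxm]; infer_instance
  have hev : ∀ᶠ z in 𝓝[Set.Ioc x (min t₁ y)] x, u z ≤ c := by
    rcases lt_or_eq_of_le (show u x ≤ c from hx.1) with hlt | heq
    · have : ∀ᶠ z in 𝓝[Set.Icc t₀ t₁] x, u z < c :=
        Filter.Tendsto.eventually_lt_const hlt (hcont x hxI)
      exact ((this.filter_mono (nhdsWithin_mono x hsub)).mono fun z hz => hz.le)
    · have hg : g x < 0 := hbar x hxI heq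
      have hd : HasDerivWithinAt u (g x) (Set.Ioc x (min t₁ y)) x := (hu x hxI).mono hsub
      rw [hasDerivWithinAt_iff_tendsto_slope' (by simp : x ∉ Set.Ioc x (min t₁ y))] at hd
      have hslope : ∀ᶠ z in 𝓝[Set.Ioc x (min t₁ y)] x, slope u x z < 0 :=
        Filter.Tendsto.eventually_lt_const hg hd
      refine (hslope.and self_mem_nhdsWithin).mono ?_
      rintro z ⟨hsz, hz⟩
      have hzx : 0 < z - x := sub_pos.mpr hz.1
      have : u z - u x = slope u x z * (z - x) := by
        rw [slope_def_field]; field_simp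
      nlinarith [mul_neg_of_neg_of_pos hsz hzx]
  obtain ⟨z, hzc, hz⟩ := (hev.and self_mem_nhdsWithin).exists
  exact ⟨z, hzc, hz.1, hz.2.trans (min_le_right _ _)⟩

lemma stay_ge {u g : ℝ → ℝ} {t₀ t₁ c : ℝ}
    (hu : ∀ t ∈ Set.Icc t₀ t₁, HasDerivWithinAt u (g t) (Set.Icc t₀ t₁) t)
    (hbar : ∀ t ∈ Set.Icc t₀ t₁, u t = c → 0 < g t)
    (h0 : c ≤ u t₀) : ∀ t ∈ Set.Icc t₀ t₁, c ≤ u t := by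
  have := stay_le (u := fun t => -u t) (g := fun t => -g t) (t₀ := t₀) (t₁ := t₁) (c := -c)
    (fun t ht => (hu t ht).neg)
    (fun t ht h => neg_neg_iff_pos.mpr (hbar t ht (by linarith [neg_eq_iff_eq_neg.mp h])))
    (by simpa using h0)
  intro t ht
  simpa using this t ht


section ODE

variable {a b d : ℝ → ℝ} {A B D b₀ M : ℝ}

/-- The right-hand side of the ODE. -/
def vf (a b d : ℝ → ℝ) : ℝ → ℝ → ℝ := fun t x => x * (a t - b t * x) + d t

lemma vf_cont (hac : Continuous a) (hbc : Continuous b) (hdc : Continuous d) :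
    Continuous (fun p : ℝ × ℝ => vf a b d p.1 p.2) := by
  unfold vf
  fun_prop

lemma vf_lipschitz (hA : ∀ t, |a t| ≤ A) (hB : ∀ t, b t ≤ B) (hb₀ : 0 < b₀)
    (hb : ∀ t, b₀ ≤ b t) (hM1 : 1 ≤ M) (t : ℝ) :
    LipschitzOnWith (Real.toNNReal (A + 2 * B * (M + 1))) (vf a b d t)
      (Set.Icc (-1) (M + 1)) := by
  rw [lipschitzOnWith_iff_dist_le_mul]
  intro x hx y hy
  rw [Real.dist_eq, Real.dist_eq, Real.coe_toNNReal _ (by nlinarith [hA 0, abs_nonneg (a 0), (hb₀.trans_le (hb 0)).le.trans (hB 0)])]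
  have hxy : vf a b d t x - vf a b d t y = (x - y) * (a t - b t * (x + y)) := by
    unfold vf; ring
  rw [hxy, abs_mul, mul_comm]
  have hBpos : 0 < B := lt_of_lt_of_le hb₀ ((hb 0).trans (hB 0))
  have h2 : |a t - b t * (x + y)| ≤ A + 2 * B * (M + 1) := by
    rw [abs_le]
    have ha1 := abs_le.mp (hA t)
    have hbt := hb t; have hBt := hB t
    have hx1 := hx.1; have hx2 := hx.2; have hy1 := hy.1; have hy2 := hy.2
    constructor <;> nlinarith [mul_nonneg (hb₀.le.trans hbt) (by linarith : (0:ℝ) ≤ x + y + 2)]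
  exact mul_le_mul_of_nonneg_right h2 (abs_nonneg _)

lemma vf_bound (hA : ∀ t, |a t| ≤ A) (hB : ∀ t, b t ≤ B) (hb₀ : 0 < b₀)
    (hb : ∀ t, b₀ ≤ b t) (hdpos : ∀ t, 0 < d t) (hD : ∀ t, d t ≤ D) (hM1 : 1 ≤ M)
    (t : ℝ) {x : ℝ} (hx : x ∈ Set.Icc (-1 : ℝ) (M + 1)) :
    |vf a b d t x| ≤ (M + 1) * (A + B * (M + 1)) + D := by
  have hBpos : 0 < B := lt_of_lt_of_le hb₀ ((hb 0).trans (hB 0))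
  have hxabs : |x| ≤ M + 1 := abs_le.mpr ⟨by linarith [hx.1], hx.2⟩
  have h1 : |x * (a t - b t * x)| ≤ (M + 1) * (A + B * (M + 1)) := by
    rw [abs_mul]
    have h2 : |a t - b t * x| ≤ A + B * (M + 1) := by
      rw [abs_le]
      have ha1 := abs_le.mp (hA t)
      have hbt := hb t; have hBt := hB t
      have hx1 := hx.1; have hx2 := hx.2
      constructor <;> nlinarith [mul_nonneg (hb₀.le.trans hbt) (by linarith : (0:ℝ) ≤ x + 1)]
    exact mul_le_mul hxabs h2 (abs_nonneg _) (by linarith)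
  have h3 : |vf a b d t x| ≤ |x * (a t - b t * x)| + |d t| := abs_add_le _ _
  have h4 := abs_of_pos (hdpos t)
  have h5 := hD t
  linarith

end ODE

section ODE2

variable {a b d : ℝ → ℝ} {A B D b₀ M : ℝ}

/-- Local existence with uniform step size. -/
lemma local_exist (hac : Continuous a) (hbc : Continuous b) (hdc : Continuous d)
    (hA : ∀ t, |a t| ≤ A) (hB : ∀ t, b t ≤ B) (hb₀ : 0 < b₀)
    (hb : ∀ t, b₀ ≤ b t) (hdpos : ∀ t, 0 < d t) (hD : ∀ t, d t ≤ D) (hM1 : 1 ≤ M)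
    (s₀ y₀ : ℝ) (hy₀ : y₀ ∈ Set.Icc 0 M) :
    ∃ u : ℝ → ℝ, u s₀ = y₀ ∧
      ∀ t ∈ Set.Icc s₀ (s₀ + ((M + 1) * (A + B * (M + 1)) + D)⁻¹),
        HasDerivWithinAt u (vf a b d t (u t))
          (Set.Icc s₀ (s₀ + ((M + 1) * (A + B * (M + 1)) + D)⁻¹)) t := by
  have hBpos : 0 < B := lt_of_lt_of_le hb₀ ((hb 0).trans (hB 0))
  have hApos : 0 ≤ A := (abs_nonneg _).trans (hA 0)
  have hDpos : 0 < D := (hdpos 0).trans_le (hD 0)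
  set C : ℝ := (M + 1) * (A + B * (M + 1)) + D with hC
  have hCpos : 0 < C := by positivity
  have hball : Set.Icc (y₀ - 1) (y₀ + 1) ⊆ Set.Icc (-1 : ℝ) (M + 1) :=
    Set.Icc_subset_Icc (by linarith [hy₀.1]) (by linarith [hy₀.2])
  have hpl : IsPicardLindelof (vf a b d) (tmin := s₀) (tmax := s₀ + C⁻¹)
      ⟨s₀, ⟨le_refl _, by simp [hCpos.le]⟩⟩ y₀ 1 0 ⟨C, hCpos.le⟩
      (Real.toNNReal (A + 2 * B * (M + 1))) := by
    constructor
    · intro t _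
      have := vf_lipschitz hA hB hb₀ hb hM1 (a := a) (b := b) (d := d) t
      refine this.mono ?_
      rw [NNReal.coe_one, Real.closedBall_eq_Icc]
      exact hball
    · intro x _
      exact (Continuous.continuousOn (by unfold vf; fun_prop))
    · intro t _ x hx
      rw [Real.norm_eq_abs]
      refine vf_bound hA hB hb₀ hb hdpos hD hM1 t ?_
      rw [NNReal.coe_one, Real.closedBall_eq_Icc] at hx
      exact hball hx
    · have : max (s₀ + C⁻¹ - s₀) (s₀ - s₀) = C⁻¹ := by
        rw [max_eq_left] <;> simp [hCpos.le, inv_nonneg]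
      simp only [NNReal.coe_mk, NNReal.coe_one, NNReal.coe_zero, sub_zero]
      rw [this]
      exact le_of_eq (mul_inv_cancel₀ hCpos.ne')
  obtain ⟨u, hu0, hu⟩ := hpl.exists_eq_forall_mem_Icc_hasDerivWithinAt₀
  exact ⟨u, hu0, hu⟩

/-- Invariance of `[0, M]`. -/
lemma invariance (hb₀ : 0 < b₀) (hb : ∀ t, b₀ ≤ b t) (hdpos : ∀ t, 0 < d t)
    (hMbig : ∀ x ≥ M, ∀ t, vf a b d t x < 0)
    {u : ℝ → ℝ} {t₀ t₁ : ℝ}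
    (hu : ∀ t ∈ Set.Icc t₀ t₁, HasDerivWithinAt u (vf a b d t (u t)) (Set.Icc t₀ t₁) t)
    (h0 : u t₀ ∈ Set.Icc 0 M) :
    ∀ t ∈ Set.Icc t₀ t₁, u t ∈ Set.Icc 0 M := by
  have hle := stay_le (g := fun t => vf a b d t (u t)) hu
    (fun t _ h => by beta_reduce; rw [h]; exact hMbig M le_rfl t) h0.2
  have hge := stay_ge (g := fun t => vf a b d t (u t)) hu
    (fun t _ h => by beta_reduce; rw [h]; unfold vf; simpa using hdpos t) h0.1
  exact fun t ht => ⟨hge t ht, hle t ht⟩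

end ODE2

section ODE3

variable {a b d : ℝ → ℝ} {A B D b₀ M : ℝ}

/-- Gluing two solutions at a matching point. -/
lemma glue_sol {v : ℝ → ℝ → ℝ} {u1 u2 : ℝ → ℝ} {t₀ t₁ t₂ : ℝ} (h01 : t₀ ≤ t₁) (h12 : t₁ ≤ t₂)
    (h1 : ∀ t ∈ Set.Icc t₀ t₁, HasDerivWithinAt u1 (v t (u1 t)) (Set.Icc t₀ t₁) t)
    (h2 : ∀ t ∈ Set.Icc t₁ t₂, HasDerivWithinAt u2 (v t (u2 t)) (Set.Icc t₁ t₂) t)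
    (heq : u1 t₁ = u2 t₁) :
    ∃ u : ℝ → ℝ, (∀ t ∈ Set.Icc t₀ t₂, HasDerivWithinAt u (v t (u t)) (Set.Icc t₀ t₂) t) ∧
      (∀ t ∈ Set.Iic t₁, u t = u1 t) ∧ (∀ t ∈ Set.Ici t₁, u t = u2 t) := by
  classical
  refine ⟨fun t => if t ≤ t₁ then u1 t else u2 t, ?_, fun t ht => if_pos ht, fun t ht => ?_⟩
  swap
  · rcases eq_or_lt_of_le (show t₁ ≤ t from ht) with h | h
    · simp only [← h, if_pos le_rfl]; exact heq
    · simp only []; rw [if_neg (not_le.mpr h)]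
  set u : ℝ → ℝ := fun t => if t ≤ t₁ then u1 t else u2 t with hu
  have e1 : ∀ s ∈ Set.Icc t₀ t₁, u s = u1 s := fun s hs => if_pos hs.2
  have e2 : ∀ s ∈ Set.Icc t₁ t₂, u s = u2 s := by
    intro s hs
    rcases eq_or_lt_of_le (hs.1 : t₁ ≤ s) with h | h
    · simp only [hu, ← h, if_pos le_rfl]; exact heq
    · exact if_neg (not_le.mpr h)
  intro t ht
  rw [← Set.Icc_union_Icc_eq_Icc h01 h12]
  rcases le_or_gt t t₁ with htl | htl
  · have hmem : t ∈ Set.Icc t₀ t₁ := ⟨ht.1, htl⟩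
    have hL : HasDerivWithinAt u (v t (u t)) (Set.Icc t₀ t₁) t := by
      have := (h1 t hmem).congr e1 (e1 t hmem)
      rwa [e1 t hmem]
    have hR : HasDerivWithinAt u (v t (u t)) (Set.Icc t₁ t₂) t := by
      rcases eq_or_lt_of_le htl with h | h
      · have hmem2 : t ∈ Set.Icc t₁ t₂ := ⟨h.ge, h.le.trans h12⟩
        have := (h2 t hmem2).congr e2 (e2 t hmem2)
        rwa [e2 t hmem2]
      · exact HasFDerivWithinAt.of_notMem_closure (by rw [closure_Icc]; exact fun hc => absurd hc.1 (not_le.mpr h))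
    exact hL.union hR
  · have hmem : t ∈ Set.Icc t₁ t₂ := ⟨htl.le, ht.2⟩
    have hR : HasDerivWithinAt u (v t (u t)) (Set.Icc t₁ t₂) t := by
      have := (h2 t hmem).congr e2 (e2 t hmem)
      rwa [e2 t hmem]
    have hL : HasDerivWithinAt u (v t (u t)) (Set.Icc t₀ t₁) t :=
      HasFDerivWithinAt.of_notMem_closure (by rw [closure_Icc]; exact fun hc => absurd hc.2 (not_le.mpr htl))
    exact hL.union hR

/-- Uniqueness of solutions on a compact interval, both valued in `[0,M]`. -/
lemma unique_on (hA : ∀ t, |a t| ≤ A) (hB : ∀ t, b t ≤ B) (hb₀ : 0 < b₀)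
    (hb : ∀ t, b₀ ≤ b t) (hM1 : 1 ≤ M)
    {u1 u2 : ℝ → ℝ} {t₀ t₁ : ℝ}
    (h1 : ∀ t ∈ Set.Icc t₀ t₁, HasDerivWithinAt u1 (vf a b d t (u1 t)) (Set.Icc t₀ t₁) t)
    (hm1 : ∀ t ∈ Set.Icc t₀ t₁, u1 t ∈ Set.Icc 0 M)
    (h2 : ∀ t ∈ Set.Icc t₀ t₁, HasDerivWithinAt u2 (vf a b d t (u2 t)) (Set.Icc t₀ t₁) t)
    (hm2 : ∀ t ∈ Set.Icc t₀ t₁, u2 t ∈ Set.Icc 0 M)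
    (heq0 : u1 t₀ = u2 t₀) : Set.EqOn u1 u2 (Set.Icc t₀ t₁) := by
  have hsub : Set.Icc (0:ℝ) M ⊆ Set.Icc (-1 : ℝ) (M + 1) :=
    Set.Icc_subset_Icc (by norm_num) (by linarith)
  refine ODE_solution_unique_of_mem_Icc_right
    (fun t _ => vf_lipschitz hA hB hb₀ hb hM1 t) (s := fun _ => Set.Icc (-1 : ℝ) (M+1))
    (fun t ht => (h1 t ht).continuousWithinAt)
    (fun t ht => (h1 t ⟨ht.1, ht.2.le⟩).mono_of_mem_nhdsWithin (Icc_mem_nhdsGE_of_mem ht))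
    (fun t ht => hsub (hm1 t ⟨ht.1, ht.2.le⟩))
    (fun t ht => (h2 t ht).continuousWithinAt)
    (fun t ht => (h2 t ⟨ht.1, ht.2.le⟩).mono_of_mem_nhdsWithin (Icc_mem_nhdsGE_of_mem ht))
    (fun t ht => hsub (hm2 t ⟨ht.1, ht.2.le⟩))
    heq0

end ODE3

section ODE4

variable {a b d : ℝ → ℝ} {A B D b₀ M : ℝ}

lemma nstep_exist (hac : Continuous a) (hbc : Continuous b) (hdc : Continuous d)
    (hA : ∀ t, |a t| ≤ A) (hB : ∀ t, b t ≤ B) (hb₀ : 0 < b₀)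
    (hb : ∀ t, b₀ ≤ b t) (hdpos : ∀ t, 0 < d t) (hD : ∀ t, d t ≤ D) (hM1 : 1 ≤ M)
    (hMbig : ∀ x ≥ M, ∀ t, vf a b d t x < 0)
    (t₀ x₀ : ℝ) (hx₀ : x₀ ∈ Set.Icc 0 M) (n : ℕ) :
    ∃ u : ℝ → ℝ, u t₀ = x₀ ∧
      (∀ t ∈ Set.Icc t₀ (t₀ + (n + 1) * ((M + 1) * (A + B * (M + 1)) + D)⁻¹),
        HasDerivWithinAt u (vf a b d t (u t))
          (Set.Icc t₀ (t₀ + (n + 1) * ((M + 1) * (A + B * (M + 1)) + D)⁻¹)) t) ∧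
      (∀ t ∈ Set.Icc t₀ (t₀ + (n + 1) * ((M + 1) * (A + B * (M + 1)) + D)⁻¹),
        u t ∈ Set.Icc 0 M) := by
  have hBpos : 0 < B := lt_of_lt_of_le hb₀ ((hb 0).trans (hB 0))
  have hApos : 0 ≤ A := (abs_nonneg _).trans (hA 0)
  have hDpos : 0 < D := (hdpos 0).trans_le (hD 0)
  set δ : ℝ := ((M + 1) * (A + B * (M + 1)) + D)⁻¹ with hδ
  have hδpos : 0 < δ := by rw [hδ]; positivity
  induction n with
  | zero =>
      obtain ⟨u, hu0, hu⟩ := local_exist hac hbc hdc hA hB hb₀ hb hdpos hD hM1 t₀ x₀ hx₀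
      rw [show ((0:ℕ) + 1 : ℝ) * δ = δ by norm_num]
      refine ⟨u, hu0, hu, invariance hb₀ hb hdpos hMbig hu (hu0 ▸ hx₀)⟩
  | succ n ih =>
      obtain ⟨u1, hu10, hu1d, hu1m⟩ := ih
      set e : ℝ := t₀ + (n + 1) * δ with he
      have hee : t₀ ≤ e := by
        rw [he]; nlinarith [hδpos]
      have heI : e ∈ Set.Icc t₀ e := ⟨hee, le_rfl⟩
      obtain ⟨u2, hu20, hu2d⟩ := local_exist hac hbc hdc hA hB hb₀ hb hdpos hD hM1 e (u1 e)
        (hu1m e heI)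
      have hu2m : ∀ t ∈ Set.Icc e (e + δ), u2 t ∈ Set.Icc 0 M :=
        invariance hb₀ hb hdpos hMbig hu2d (hu20 ▸ hu1m e heI)
      have hkey : t₀ + (↑n + 1 + 1) * δ = e + δ := by rw [he]; ring
      obtain ⟨u, hud, huL, huR⟩ := glue_sol hee (by linarith : e ≤ e + δ) hu1d hu2d hu20.symm
      push_cast
      rw [hkey]
      refine ⟨u, by rw [huL t₀ hee]; exact hu10, hud, ?_⟩
      intro t ht
      rcases le_or_gt t e with h | h
      · rw [huL t h]; exact hu1m t ⟨ht.1, h⟩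
      · rw [huR t h.le]; exact hu2m t ⟨h.le, ht.2⟩

lemma global_exist (hac : Continuous a) (hbc : Continuous b) (hdc : Continuous d)
    (hA : ∀ t, |a t| ≤ A) (hB : ∀ t, b t ≤ B) (hb₀ : 0 < b₀)
    (hb : ∀ t, b₀ ≤ b t) (hdpos : ∀ t, 0 < d t) (hD : ∀ t, d t ≤ D) (hM1 : 1 ≤ M)
    (hMbig : ∀ x ≥ M, ∀ t, vf a b d t x < 0)
    (t₀ x₀ : ℝ) (hx₀ : x₀ ∈ Set.Icc 0 M) :
    ∃ U : ℝ → ℝ, U t₀ = x₀ ∧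
      (∀ t ∈ Set.Ici t₀, HasDerivWithinAt U (vf a b d t (U t)) (Set.Ici t₀) t) ∧
      (∀ t ∈ Set.Ici t₀, U t ∈ Set.Icc 0 M) := by
  have hBpos : 0 < B := lt_of_lt_of_le hb₀ ((hb 0).trans (hB 0))
  have hApos : 0 ≤ A := (abs_nonneg _).trans (hA 0)
  have hDpos : 0 < D := (hdpos 0).trans_le (hD 0)
  set δ : ℝ := ((M + 1) * (A + B * (M + 1)) + D)⁻¹ with hδ
  have hδpos : 0 < δ := by rw [hδ]; positivity
  set E : ℕ → ℝ := fun n => t₀ + (n + 1) * δ with hE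
  have key := nstep_exist hac hbc hdc hA hB hb₀ hb hdpos hD hM1 hMbig t₀ x₀ hx₀
  set F : ℕ → ℝ → ℝ := fun n => (key n).choose with hF
  have hF0 : ∀ n : ℕ, F n t₀ = x₀ := fun n => (key n).choose_spec.1
  have hFd : ∀ n : ℕ, ∀ t ∈ Set.Icc t₀ (E n),
      HasDerivWithinAt (F n) (vf a b d t (F n t)) (Set.Icc t₀ (E n)) t :=
    fun n => (key n).choose_spec.2.1
  have hFm : ∀ n : ℕ, ∀ t ∈ Set.Icc t₀ (E n), F n t ∈ Set.Icc 0 M :=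
    fun n => (key n).choose_spec.2.2
  have hmono : ∀ m n : ℕ, m ≤ n → Set.Icc t₀ (E m) ⊆ Set.Icc t₀ (E n) := by
    intro m n hmn
    apply Set.Icc_subset_Icc le_rfl
    have : (m : ℝ) ≤ n := Nat.cast_le.mpr hmn
    simp only [hE]
    nlinarith [hδpos]
  have hagree : ∀ m n : ℕ, m ≤ n → Set.EqOn (F m) (F n) (Set.Icc t₀ (E m)) := by
    intro m n hmn
    refine unique_on hA hB hb₀ hb hM1 (hFd m) (hFm m)
      (fun t ht => (hFd n t (hmono m n hmn ht)).mono (hmono m n hmn))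
      (fun t ht => hFm n t (hmono m n hmn ht)) ?_
    rw [hF0 m, hF0 n]
  have hagree' : ∀ m n : ℕ, ∀ t, t ∈ Set.Icc t₀ (E m) →
      t ∈ Set.Icc t₀ (E n) → F m t = F n t := by
    intro m n t htm htn
    rcases le_total m n with h | h
    · exact hagree m n h htm
    · exact (hagree n m h htn).symm
  set N : ℝ → ℕ := fun t => ⌈(t - t₀) / δ⌉₊ with hN
  have hNmem : ∀ t, t₀ ≤ t → t ∈ Set.Icc t₀ (E (N t)) := by
    intro t ht
    refine ⟨ht, ?_⟩
    have h1 : (t - t₀) / δ ≤ N t := Nat.le_ceil _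
    have h2 : t - t₀ ≤ N t * δ := by
      rw [div_le_iff₀ hδpos] at h1; linarith
    simp only [hE]
    nlinarith [hδpos]
  refine ⟨fun t => F (N t) t, hF0 _, ?_, ?_⟩
  · intro t ht
    set n : ℕ := N t with hn
    have htn : t ∈ Set.Icc t₀ (E n) := hNmem t ht
    have hEsucc : E n < E (n + 1) := by
      simp only [hE]; push_cast; nlinarith [hδpos]
    have htlt : t < E (n + 1) := lt_of_le_of_lt htn.2 hEsucc
    have htn1 : t ∈ Set.Icc t₀ (E (n + 1)) := ⟨ht, htlt.le⟩
    have hEq : ∀ s ∈ Set.Icc t₀ (E (n + 1)), (fun s => F (N s) s) s = F (n + 1) s :=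
      fun s hs => hagree' (N s) (n + 1) s (hNmem s hs.1) hs
    have hd : HasDerivWithinAt (fun s => F (N s) s) (vf a b d t ((fun s => F (N s) s) t))
        (Set.Icc t₀ (E (n + 1))) t := by
      have h := (hFd (n + 1) t htn1).congr hEq (hEq t htn1)
      rwa [hEq t htn1]
    refine hd.mono_of_mem_nhdsWithin ?_
    rw [mem_nhdsWithin]
    exact ⟨Set.Iio (E (n + 1)), isOpen_Iio, htlt, fun z hz => ⟨hz.2, hz.1.le⟩⟩
  · intro t ht
    exact hFm (N t) t (hNmem t ht)

end ODE4


section ANA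

lemma periodic_abs_bound {g : ℝ → ℝ} {T : ℝ} (hT : 0 < T) (hg : Continuous g)
    (hp : ∀ t, g (t + T) = g t) : ∃ C, 0 ≤ C ∧ ∀ t, |g t| ≤ C := by
  obtain ⟨C, hC⟩ := (isCompact_Icc (a := (0:ℝ)) (b := T)).exists_bound_of_continuousOn
    hg.continuousOn
  have hp' : Function.Periodic g T := hp
  refine ⟨C, le_trans (abs_nonneg (g 0)) (by simpa using hC 0 ⟨le_rfl, hT.le⟩), fun t => ?_⟩
  obtain ⟨y, hy, hyeq⟩ := hp'.exists_mem_Ico₀ hT t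
  rw [hyeq]
  simpa using hC y ⟨hy.1, hy.2.le⟩

lemma periodic_pos_lower {g : ℝ → ℝ} {T : ℝ} (hT : 0 < T) (hg : Continuous g)
    (hp : ∀ t, g (t + T) = g t) (hpos : ∀ t, 0 < g t) : ∃ ε, 0 < ε ∧ ∀ t, ε ≤ g t := by
  obtain ⟨x₀, hx₀, hmin⟩ := (isCompact_Icc (a := (0:ℝ)) (b := T)).exists_isMinOn
    ⟨0, le_rfl, hT.le⟩ hg.continuousOn
  have hp' : Function.Periodic g T := hp
  refine ⟨g x₀, hpos x₀, fun t => ?_⟩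
  obtain ⟨y, hy, hyeq⟩ := hp'.exists_mem_Ico₀ hT t
  rw [hyeq]
  exact isMinOn_iff.mp hmin y ⟨hy.1, hy.2.le⟩

lemma linear_ode_repr {c v : ℝ → ℝ} (hc : Continuous c)
    (hv : ∀ t, HasDerivAt v (c t * v t) t) :
    ∀ t, v t = v 0 * Real.exp (∫ s in (0:ℝ)..t, c s) := by
  set G : ℝ → ℝ := fun t => ∫ s in (0:ℝ)..t, c s with hGdef
  have hG : ∀ t, HasDerivAt G (c t) t := fun t =>
    intervalIntegral.integral_hasDerivAt_right (hc.intervalIntegrable 0 t)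
      (hc.stronglyMeasurableAtFilter _ _) hc.continuousAt
  have hh : ∀ t, HasDerivAt (fun t => v t * Real.exp (-G t)) 0 t := by
    intro t
    have h1 : HasDerivAt (fun t => v t * Real.exp (-G t)) _ t := (hv t).mul (((hG t).neg).exp)
    convert h1 using 1
    rw [Pi.neg_apply]; ring
  have hconst : ∀ t, v t * Real.exp (-G t) = v 0 * Real.exp (-G 0) := by
    intro t
    exact is_const_of_deriv_eq_zero (fun s => (hh s).differentiableAt)
      (fun s => (hh s).deriv) t 0
  intro t
  have := hconst t
  have hG0 : G 0 = 0 := intervalIntegral.integral_same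
  rw [hG0] at this
  simp only [neg_zero, Real.exp_zero, mul_one] at this
  have hexp : Real.exp (-G t) * Real.exp (G t) = 1 := by
    rw [← Real.exp_add]; simp
  calc v t = v t * Real.exp (-G t) * Real.exp (G t) := by rw [mul_assoc, hexp, mul_one]
    _ = v 0 * Real.exp (G t) := by rw [this]

lemma linear_ode_repr_right {c v : ℝ → ℝ} (hc : Continuous c)
    (hv : ∀ t ∈ Set.Ici (0:ℝ), HasDerivWithinAt v (c t * v t) (Set.Ici 0) t) :
    ∀ t ∈ Set.Ici (0:ℝ), v t = v 0 * Real.exp (∫ s in (0:ℝ)..t, c s) := by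
  set G : ℝ → ℝ := fun t => ∫ s in (0:ℝ)..t, c s with hGdef
  have hG : ∀ t, HasDerivAt G (c t) t := fun t =>
    intervalIntegral.integral_hasDerivAt_right (hc.intervalIntegrable 0 t)
      (hc.stronglyMeasurableAtFilter _ _) hc.continuousAt
  intro t ht
  have hvc : ContinuousOn v (Set.Icc 0 t) := fun s hs =>
    ((hv s hs.1).continuousWithinAt).mono (fun z hz => (hz.1 : (0:ℝ) ≤ z))
  have hcont : ContinuousOn (fun s => v s * Real.exp (-G s)) (Set.Icc 0 t) :=
    hvc.mul (Continuous.continuousOn (by fun_prop))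
  have hderiv : ∀ s ∈ Set.Ico 0 t, HasDerivWithinAt (fun s => v s * Real.exp (-G s)) 0
      (Set.Ici s) s := by
    intro s hs
    have h1 : HasDerivWithinAt v (c s * v s) (Set.Ici s) s :=
      (hv s hs.1).mono (Set.Ici_subset_Ici.mpr hs.1)
    have h2 : HasDerivWithinAt (fun s => v s * Real.exp (-G s)) _ (Set.Ici s) s :=
      h1.mul (((hG s).neg).exp).hasDerivWithinAt
    convert h2 using 1
    rw [Pi.neg_apply]; ring
  have := constant_of_has_deriv_right_zero hcont hderiv t ⟨ht, le_rfl⟩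
  have hG0 : G 0 = 0 := intervalIntegral.integral_same
  rw [hG0] at this
  simp only [neg_zero, Real.exp_zero, mul_one] at this
  have hexp : Real.exp (-G t) * Real.exp (G t) = 1 := by
    rw [← Real.exp_add]; simp
  calc v t = v t * Real.exp (-G t) * Real.exp (G t) := by rw [mul_assoc, hexp, mul_one]
    _ = v 0 * Real.exp (G t) := by rw [this]

lemma periodic_sol_integral {a b d z : ℝ → ℝ} {T : ℝ}
    (hac : Continuous a) (hbc : Continuous b) (hdc : Continuous d)
    (hz : ∀ t, HasDerivAt z (z t * (a t - b t * z t) + d t) t)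
    (hzpos : ∀ t, 0 < z t) (hzper : z T = z 0) :
    ∫ s in (0:ℝ)..T, (a s - b s * z s + d s / z s) = 0 := by
  have hzc : Continuous z := continuous_iff_continuousAt.mpr fun t => (hz t).continuousAt
  have hF : ∀ t, HasDerivAt (fun t => Real.log (z t)) (a t - b t * z t + d t / z t) t := by
    intro t
    have h1 := (hz t).log (hzpos t).ne'
    have hz0 : z t ≠ 0 := (hzpos t).ne'
    convert h1 using 1
    field_simp
  have hint : IntervalIntegrable (fun s => a s - b s * z s + d s / z s)
      MeasureTheory.volume 0 T :=
    ((hac.sub (hbc.mul hzc)).add (hdc.div hzc (fun t => (hzpos t).ne'))).intervalIntegrable 0 T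
  have := intervalIntegral.integral_eq_sub_of_hasDerivAt (fun s _ => hF s) hint
  rw [this, hzper, sub_self]

lemma pos_of_sol {u : ℝ → ℝ} {g t₁ : ℝ} (ht₁ : 0 < t₁) (hd : HasDerivAt u g t₁)
    (hg : 0 < g) (hnn : ∀ t ∈ Set.Ici (0:ℝ), 0 ≤ u t) (hu0 : u t₁ = 0) : False := by
  rw [hasDerivAt_iff_tendsto_slope] at hd
  have hslope : ∀ᶠ z in 𝓝[≠] t₁, 0 < slope u t₁ z :=
    hd.eventually (Filter.Tendsto.eventually_const_lt hg tendsto_id)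
  have hslope' : ∀ᶠ z in 𝓝[<] t₁, 0 < slope u t₁ z :=
    hslope.filter_mono (nhdsWithin_mono _ (fun z hz => ne_of_lt hz))
  have hpos' : ∀ᶠ z in 𝓝[<] t₁, (0:ℝ) < z :=
    eventually_nhdsWithin_of_eventually_nhds (eventually_gt_nhds ht₁)
  obtain ⟨z, hsz, hz0, hzlt⟩ := (hslope'.and (hpos'.and self_mem_nhdsWithin)).exists
  rw [slope_def_field] at hsz
  have h1 : z - t₁ < 0 := sub_neg.mpr hzlt
  have h2 : u z - u t₁ < 0 := by
    by_contra h
    push_neg at h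
    have := div_nonpos_of_nonneg_of_nonpos h h1.le
    linarith
  have := hnn z (le_of_lt hz0)
  rw [hu0] at h2
  linarith

end ANA


theorem unique_attracting_positive_periodic_solution_scalar_ode
    (T : ℝ) (hT : 0 < T)
    (a b d : ℝ → ℝ)
    (hac : Continuous a) (hbc : Continuous b) (hdc : Continuous d)
    (hap : ∀ t, a (t + T) = a t) (hbp : ∀ t, b (t + T) = b t)
    (hdp : ∀ t, d (t + T) = d t)
    (hbpos : ∀ t, 0 < b t) (hdpos : ∀ t, 0 < d t) :
    ∃ ustar : ℝ → ℝ,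
      ((∀ t, HasDerivAt ustar (ustar t * (a t - b t * ustar t) + d t) t) ∧
        (∀ t, ustar (t + T) = ustar t) ∧ (∀ t, 0 < ustar t)) ∧
      (∀ w : ℝ → ℝ,
        ((∀ t, HasDerivAt w (w t * (a t - b t * w t) + d t) t) ∧
          (∀ t, w (t + T) = w t) ∧ (∀ t, 0 < w t)) → w = ustar) ∧
      (∀ u : ℝ → ℝ,
        (∀ t ∈ Set.Ici (0:ℝ),
          HasDerivWithinAt u (u t * (a t - b t * u t) + d t) (Set.Ici 0) t) →
        0 ≤ u 0 →
        Tendsto (fun t => u t - ustar t) atTop (𝓝 0)) := by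
  classical
  -- Constants
  obtain ⟨A, hA0, hA⟩ := periodic_abs_bound hT hac hap
  obtain ⟨B, hB0, hB'⟩ := periodic_abs_bound hT hbc hbp
  have hB : ∀ t, b t ≤ B := fun t => (le_abs_self _).trans (hB' t)
  obtain ⟨D, hD0, hD'⟩ := periodic_abs_bound hT hdc hdp
  have hD : ∀ t, d t ≤ D := fun t => (le_abs_self _).trans (hD' t)
  obtain ⟨b₀, hb₀, hb⟩ := periodic_pos_lower hT hbc hbp hbpos
  set M : ℝ := max 1 ((A + D + 1) / b₀) with hM
  have hM1 : 1 ≤ M := le_max_left _ _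
  have h0M : (0:ℝ) ≤ M := by linarith
  have hMbig : ∀ x ≥ M, ∀ t, vf a b d t x < 0 := by
    intro x hx t
    have hx1 : 1 ≤ x := hM1.trans hx
    have hxb : A + D + 1 ≤ b₀ * x := by
      have h2 : (A + D + 1) / b₀ ≤ x := (le_max_right _ _).trans hx
      rw [div_le_iff₀ hb₀] at h2; linarith
    have h3 : x * a t ≤ x * A :=
      mul_le_mul_of_nonneg_left ((le_abs_self _).trans (hA t)) (by linarith)
    have h4 : b₀ * x ≤ b t * x := mul_le_mul_of_nonneg_right (hb t) (by linarith)
    have h5 := hD t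
    have h6 : x * (b₀ * x) ≤ x * (b t * x) := mul_le_mul_of_nonneg_left h4 (by linarith)
    show x * (a t - b t * x) + d t < 0
    nlinarith
  -- Integer periodicity
  have haZ : ∀ (k : ℤ) (t : ℝ), a (t + k * T) = a t := by
    intro k t
    have hp' : Function.Periodic a T := hap
    have h := hp'.sub_int_mul_eq (n := k) (x := t + (k:ℝ) * T)
    rw [show t + (k:ℝ) * T - (k:ℝ) * T = t from by ring] at h; exact h.symm
  have hbZ : ∀ (k : ℤ) (t : ℝ), b (t + k * T) = b t := by
    intro k t
    have hp' : Function.Periodic b T := hbp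
    have h := hp'.sub_int_mul_eq (n := k) (x := t + (k:ℝ) * T)
    rw [show t + (k:ℝ) * T - (k:ℝ) * T = t from by ring] at h; exact h.symm
  have hdZ : ∀ (k : ℤ) (t : ℝ), d (t + k * T) = d t := by
    intro k t
    have hp' : Function.Periodic d T := hdp
    have h := hp'.sub_int_mul_eq (n := k) (x := t + (k:ℝ) * T)
    rw [show t + (k:ℝ) * T - (k:ℝ) * T = t from by ring] at h; exact h.symm
  have hvfZ : ∀ (k : ℤ) (t x : ℝ), vf a b d (t + k * T) x = vf a b d t x := by
    intro k t x
    unfold vf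
    rw [haZ k t, hbZ k t, hdZ k t]
  have hvfT : ∀ (t x : ℝ), vf a b d (t + T) x = vf a b d t x := by
    intro t x
    have := hvfZ 1 t x
    rwa [show t + (1:ℤ) * T = t + T by push_cast; ring] at this
  -- Global solutions and the Poincaré map
  have hglob := global_exist hac hbc hdc hA hB hb₀ hb hdpos hD hM1 hMbig
  set S : ℝ → ℝ → ℝ :=
    fun x => if hx : x ∈ Set.Icc 0 M then (hglob 0 x hx).choose else 0 with hSdef
  have hS0 : ∀ x, x ∈ Set.Icc 0 M → S x 0 = x := by
    intro x hx
    simp only [hSdef, dif_pos hx]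
    exact (hglob 0 x hx).choose_spec.1
  have hSd : ∀ x, x ∈ Set.Icc 0 M → ∀ t ∈ Set.Ici (0:ℝ),
      HasDerivWithinAt (S x) (vf a b d t (S x t)) (Set.Ici 0) t := by
    intro x hx
    simp only [hSdef, dif_pos hx]
    exact (hglob 0 x hx).choose_spec.2.1
  have hSm : ∀ x, x ∈ Set.Icc 0 M → ∀ t ∈ Set.Ici (0:ℝ), S x t ∈ Set.Icc 0 M := by
    intro x hx
    simp only [hSdef, dif_pos hx]
    exact (hglob 0 x hx).choose_spec.2.2
  have hsub01 : Set.Icc (0:ℝ) M ⊆ Set.Icc (-1:ℝ) (M+1) :=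
    Set.Icc_subset_Icc (by norm_num) (by linarith)
  set L : NNReal := Real.toNNReal (A + 2 * B * (M + 1)) with hL
  -- Lipschitz continuity of the time-T map
  have hPlip : ∀ x ∈ Set.Icc (0:ℝ) M, ∀ y ∈ Set.Icc (0:ℝ) M,
      dist (S x T) (S y T) ≤ dist x y * Real.exp (L * T) := by
    intro x hx y hy
    have key := dist_le_of_trajectories_ODE_of_mem (v := vf a b d)
      (s := fun _ => Set.Icc (-1:ℝ) (M+1)) (K := L)
      (fun t _ => vf_lipschitz hA hB hb₀ hb hM1 t)
      (fun t ht => ((hSd x hx t ht.1).continuousWithinAt).mono (fun z hz => hz.1))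
      (fun t ht => (hSd x hx t ht.1).mono (Set.Ici_subset_Ici.mpr ht.1))
      (fun t ht => hsub01 (hSm x hx t ht.1))
      (fun t ht => ((hSd y hy t ht.1).continuousWithinAt).mono (fun z hz => hz.1))
      (fun t ht => (hSd y hy t ht.1).mono (Set.Ici_subset_Ici.mpr ht.1))
      (fun t ht => hsub01 (hSm y hy t ht.1))
      (le_refl (dist (S x 0) (S y 0))) T ⟨hT.le, le_rfl⟩
    rw [hS0 x hx, hS0 y hy, sub_zero] at key
    exact key
  set P : ℝ → ℝ := fun x => S x T with hP
  have hPc : ContinuousOn P (Set.Icc 0 M) := by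
    have : LipschitzOnWith (Real.toNNReal (Real.exp (L * T))) P (Set.Icc 0 M) := by
      rw [lipschitzOnWith_iff_dist_le_mul]
      intro x hx y hy
      rw [Real.coe_toNNReal _ (Real.exp_nonneg _)]
      calc dist (P x) (P y) ≤ dist x y * Real.exp (L * T) := hPlip x hx y hy
        _ = Real.exp (L * T) * dist x y := mul_comm _ _
    exact this.continuousOn
  -- Fixed point via IVT
  have hgc : ContinuousOn (fun x => P x - x) (Set.Icc 0 M) := hPc.sub continuousOn_id
  have hgM : P M - M ≤ 0 := by
    have := (hSm M ⟨h0M, le_rfl⟩ T hT.le).2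
    simpa [hP] using by linarith
  have hg0 : 0 ≤ P 0 - 0 := by
    have := (hSm 0 ⟨le_rfl, h0M⟩ T hT.le).1
    simpa [hP] using this
  obtain ⟨p, hpmem, hPp⟩ := intermediate_value_Icc' h0M hgc ⟨hgM, hg0⟩
  have hPfix : S p T = p := by
    have : P p - p = 0 := hPp
    simpa [hP] using by linarith [this]
  -- The solution starting at the fixed point
  set U : ℝ → ℝ := S p with hUdef
  have hU0 : U 0 = p := hS0 p hpmem
  have hUT : U T = p := hPfix
  have hUd : ∀ t ∈ Set.Ici (0:ℝ), HasDerivWithinAt U (vf a b d t (U t)) (Set.Ici 0) t :=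
    hSd p hpmem
  have hUm : ∀ t ∈ Set.Ici (0:ℝ), U t ∈ Set.Icc 0 M := hSm p hpmem
  -- Forward periodicity of U
  have hper : ∀ t ∈ Set.Ici (0:ℝ), U (t + T) = U t := by
    have hVd : ∀ t ∈ Set.Ici (0:ℝ), HasDerivWithinAt (fun s => U (s + T))
        (vf a b d t (U (t + T))) (Set.Ici 0) t := by
      intro t ht
      have h1 : HasDerivWithinAt U (vf a b d (t + T) (U (t + T))) (Set.Ici 0) (t + T) :=
        hUd (t + T) (by simp only [Set.mem_Ici] at ht ⊢; linarith)
      have h2 : HasDerivWithinAt (fun s : ℝ => s + T) 1 (Set.Ici 0) t :=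
        ((hasDerivAt_id t).add_const T).hasDerivWithinAt
      have h3 := HasDerivWithinAt.comp t h1 h2
        (fun z hz => by simp only [Set.mem_Ici] at hz ⊢; linarith)
      rw [hvfT t (U (t + T))] at h3
      simpa [Function.comp_def] using h3
    intro t ht
    have ht' : (0:ℝ) ≤ t := ht
    have key := unique_on hA hB hb₀ hb hM1 (t₀ := (0:ℝ)) (t₁ := t)
      (u1 := fun s => U (s + T)) (u2 := U)
      (fun s hs => (hVd s hs.1).mono (fun z hz => hz.1))
      (fun s hs => hUm (s + T) (by have := hs.1; simp only [Set.mem_Ici]; linarith))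
      (fun s hs => (hUd s hs.1).mono (fun z hz => hz.1))
      (fun s hs => hUm s hs.1)
      (by show U (0 + T) = U 0; rw [zero_add, hUT, hU0])
    exact key ⟨ht', le_rfl⟩
  -- Positivity of U for positive times
  have hUpos : ∀ t : ℝ, 0 < t → 0 < U t := by
    intro t ht
    rcases lt_or_eq_of_le (hUm t ht.le).1 with h | h
    · exact h
    · exfalso
      have hd : HasDerivAt U (vf a b d t (U t)) t :=
      (hUd t ht.le).hasDerivAt (Ici_mem_nhds ht)
      refine pos_of_sol ht hd ?_ (fun s hs => (hUm s hs).1) h.symm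
      rw [← h]
      show 0 < 0 * (a t - b t * 0) + d t
      simpa using hdpos t
  -- Shift invariance with integer multiples
  have hUadd : ∀ s : ℝ, 0 ≤ s → ∀ k : ℕ, U (s + k * T) = U s := by
    intro s hs k
    induction k with
    | zero => simp
    | succ k ih =>
        have h1 : s + (k + 1 : ℕ) * T = (s + k * T) + T := by push_cast; ring
        rw [h1, hper (s + k * T) (by show (0:ℝ) ≤ s + (k:ℝ) * T; have hkT : (0:ℝ) ≤ (k:ℝ) * T := (by positivity); linarith), ih]
  have hsame : ∀ s : ℝ, 0 ≤ s → ∀ j : ℤ, 0 ≤ s + j * T → U (s + j * T) = U s := by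
    intro s hs j hj
    rcases le_or_gt 0 j with h | h
    · obtain ⟨n, rfl⟩ := Int.eq_ofNat_of_zero_le h
      rw [show s + ((n : ℤ) : ℝ) * T = s + n * T by push_cast; ring]
      exact hUadd s hs n
    · obtain ⟨n, rfl⟩ : ∃ n : ℕ, j = -(n : ℤ) := ⟨j.natAbs, by omega⟩
      have h2 : s = (s + (-(n:ℤ) : ℤ) * T) + n * T := by push_cast; ring
      calc U (s + (-(n:ℤ) : ℤ) * T) = U ((s + (-(n:ℤ) : ℤ) * T) + n * T) :=
            (hUadd _ hj n).symm
        _ = U s := by rw [← h2]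
  -- The fractional part facts
  have hfrac : ∀ t : ℝ, t - T * ⌊t / T⌋ ∈ Set.Ico 0 T := by
    intro t
    have h1 : t - T * ⌊t / T⌋ = T * Int.fract (t / T) := by
      rw [Int.fract, mul_sub, mul_div_cancel₀ t hT.ne']
    rw [h1]
    constructor
    · exact mul_nonneg hT.le (Int.fract_nonneg _)
    · have h2 := Int.fract_lt_one (t / T)
      have := mul_lt_mul_of_pos_left h2 hT
      simpa using this
  set ustar : ℝ → ℝ := fun t => U (t - T * ⌊t / T⌋ + T) with hustardef
  have hrep : ∀ t : ℝ, ∀ k : ℤ, 0 ≤ t + k * T → ustar t = U (t + k * T) := by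
    intro t k hk
    have h₀ : t - T * ⌊t / T⌋ + T = t + ((1 - ⌊t / T⌋ : ℤ) : ℝ) * T := by push_cast; ring
    have hge : (0:ℝ) ≤ t + ((1 - ⌊t / T⌋ : ℤ) : ℝ) * T := by
      rw [← h₀]
      have := (hfrac t).1
      linarith
    have h1 : ustar t = U (t + ((1 - ⌊t / T⌋ : ℤ) : ℝ) * T) := by
      simp only [hustardef]
      rw [h₀]
    rw [h1]
    have h2 := hsame (t + k * T) hk (1 - ⌊t / T⌋ - k)
      (by rw [show t + (k:ℝ) * T + ((1 - ⌊t / T⌋ - k : ℤ) : ℝ) * T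
              = t + ((1 - ⌊t / T⌋ : ℤ) : ℝ) * T by push_cast; ring]; exact hge)
    rw [show t + (k:ℝ) * T + ((1 - ⌊t / T⌋ - k : ℤ) : ℝ) * T
        = t + ((1 - ⌊t / T⌋ : ℤ) : ℝ) * T by push_cast; ring] at h2
    exact h2
  have hrep' : ∀ t : ℝ, ustar t = U (t + ((1 - ⌊t / T⌋ : ℤ) : ℝ) * T) ∧
      T ≤ t + ((1 - ⌊t / T⌋ : ℤ) : ℝ) * T := by
    intro t
    have h₀ : t - T * ⌊t / T⌋ + T = t + ((1 - ⌊t / T⌋ : ℤ) : ℝ) * T := by push_cast; ring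
    have hge : T ≤ t + ((1 - ⌊t / T⌋ : ℤ) : ℝ) * T := by
      rw [← h₀]
      have := (hfrac t).1
      linarith
    exact ⟨hrep t _ (le_trans hT.le hge), hge⟩
  -- ustar is positive
  have hustarpos : ∀ t, 0 < ustar t := by
    intro t
    obtain ⟨h1, h2⟩ := hrep' t
    rw [h1]
    exact hUpos _ (lt_of_lt_of_le hT h2)
  -- ustar is periodic
  have hustarper : ∀ t, ustar (t + T) = ustar t := by
    intro t
    obtain ⟨h1, h2⟩ := hrep' t
    have h3 : ustar (t + T) = U ((t + T) + ((- ⌊t / T⌋ : ℤ) : ℝ) * T) := by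
      refine hrep (t + T) _ ?_
      rw [show t + T + ((- ⌊t / T⌋ : ℤ) : ℝ) * T = t + ((1 - ⌊t / T⌋ : ℤ) : ℝ) * T by
        push_cast; ring]
      linarith [hT.le.trans h2]
    rw [h3, h1, show t + T + ((- ⌊t / T⌋ : ℤ) : ℝ) * T = t + ((1 - ⌊t / T⌋ : ℤ) : ℝ) * T by
      push_cast; ring]
  -- ustar solves the ODE everywhere
  have hustard : ∀ t, HasDerivAt ustar (vf a b d t (ustar t)) t := by
    intro t₀
    obtain ⟨h1, h2⟩ := hrep' t₀
    set k₀ : ℤ := 1 - ⌊t₀ / T⌋ with hk₀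
    set s₀ : ℝ := t₀ + (k₀ : ℝ) * T with hs₀
    have hs₀pos : 0 < s₀ := lt_of_lt_of_le hT h2
    have hUd' : HasDerivAt U (vf a b d s₀ (U s₀)) s₀ :=
      (hUd s₀ hs₀pos.le).hasDerivAt (Ici_mem_nhds hs₀pos)
    have hcomp : HasDerivAt (fun t => U (t + (k₀ : ℝ) * T)) (vf a b d s₀ (U s₀)) t₀ := by
      have h3 := HasDerivAt.comp t₀ hUd' ((hasDerivAt_id t₀).add_const ((k₀ : ℝ) * T))
      simpa [Function.comp_def] using h3
    have hev : ustar =ᶠ[𝓝 t₀] fun t => U (t + (k₀ : ℝ) * T) := by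
      have hopen : Set.Ioi (t₀ - s₀) ∈ 𝓝 t₀ := Ioi_mem_nhds (by linarith)
      filter_upwards [hopen] with t htmem
      refine hrep t k₀ ?_
      have h4 : t₀ - s₀ < t := htmem
      have h5 : s₀ = t₀ + (k₀ : ℝ) * T := hs₀
      linarith
    have hfinal := hcomp.congr_of_eventuallyEq hev
    rw [← h1] at hfinal
    rw [hs₀, hvfZ k₀ t₀ (ustar t₀)] at hfinal
    exact hfinal
  have hustarc : Continuous ustar :=
    continuous_iff_continuousAt.mpr fun t => (hustard t).continuousAt
  have hIu : ∫ s in (0:ℝ)..T, (a s - b s * ustar s + d s / ustar s) = 0 :=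
    periodic_sol_integral hac hbc hdc (fun t => hustard t) hustarpos
      (by have := hustarper 0; rwa [zero_add] at this)
  have hint2 : IntervalIntegrable (fun s => a s - b s * ustar s + d s / ustar s)
      MeasureTheory.volume 0 T :=
    ((hac.sub (hbc.mul hustarc)).add
      (hdc.div hustarc (fun t => (hustarpos t).ne'))).intervalIntegrable 0 T
  refine ⟨ustar, ⟨fun t => hustard t, hustarper, hustarpos⟩, ?_, ?_⟩
  · -- Uniqueness of the positive periodic solution
    rintro w ⟨hwd, hwper, hwpos⟩
    have hwd' : ∀ t, HasDerivAt w (vf a b d t (w t)) t := fun t => hwd t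
    have hwc : Continuous w := continuous_iff_continuousAt.mpr fun t => (hwd' t).continuousAt
    have hcc : Continuous (fun t => a t - b t * (w t + ustar t)) :=
      hac.sub (hbc.mul (hwc.add hustarc))
    have hvd : ∀ t, HasDerivAt (fun t => w t - ustar t)
        ((a t - b t * (w t + ustar t)) * (w t - ustar t)) t := by
      intro t
      have h1 : HasDerivAt (fun t => w t - ustar t) _ t := (hwd' t).sub (hustard t)
      convert h1 using 1
      show (a t - b t * (w t + ustar t)) * (w t - ustar t)
        = vf a b d t (w t) - vf a b d t (ustar t)
      unfold vf
      ring
    have hrepr := linear_ode_repr hcc hvd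
    have hIw : ∫ s in (0:ℝ)..T, (a s - b s * w s + d s / w s) = 0 :=
      periodic_sol_integral hac hbc hdc hwd' hwpos
        (by have := hwper 0; rwa [zero_add] at this)
    have hint1 : IntervalIntegrable (fun s => a s - b s * w s + d s / w s)
        MeasureTheory.volume 0 T :=
      ((hac.sub (hbc.mul hwc)).add
        (hdc.div hwc (fun t => (hwpos t).ne'))).intervalIntegrable 0 T
    have hkey : ∫ s in (0:ℝ)..T, ((a s - b s * ustar s + d s / ustar s)
        - (a s - b s * w s + d s / w s)) = 0 := by
      rw [intervalIntegral.integral_sub hint2 hint1, hIu, hIw, sub_zero]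
    have hident : ∀ s, (a s - b s * ustar s + d s / ustar s) - (a s - b s * w s + d s / w s)
        = (w s - ustar s) * (b s + d s / (w s * ustar s)) := by
      intro s
      have hw0 : w s ≠ 0 := (hwpos s).ne'
      have hu0 : ustar s ≠ 0 := (hustarpos s).ne'
      field_simp
      ring
    have hkey2 : ∫ s in (0:ℝ)..T, (w s - ustar s) * (b s + d s / (w s * ustar s)) = 0 := by
      refine Eq.trans ?_ hkey
      exact intervalIntegral.integral_congr (fun s _ => (hident s).symm)
    have hcontI : Continuous (fun s => (w s - ustar s) * (b s + d s / (w s * ustar s))) :=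
      (hwc.sub hustarc).mul (hbc.add (hdc.div (hwc.mul hustarc)
        (fun s => (mul_pos (hwpos s) (hustarpos s)).ne')))
    have hfacpos : ∀ s, 0 < b s + d s / (w s * ustar s) := fun s =>
      add_pos (hbpos s) (div_pos (hdpos s) (mul_pos (hwpos s) (hustarpos s)))
    rcases lt_trichotomy (w 0 - ustar 0) 0 with hv0 | hv0 | hv0
    · exfalso
      have hneg : ∀ s, w s - ustar s < 0 := by
        intro s
        have := hrepr s
        beta_reduce at this
        rw [this]
        exact mul_neg_of_neg_of_pos hv0 (Real.exp_pos _)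
      have hposI : 0 < ∫ s in (0:ℝ)..T, -((w s - ustar s) * (b s + d s / (w s * ustar s))) := by
        refine intervalIntegral.intervalIntegral_pos_of_pos (hcontI.neg.intervalIntegrable 0 T) ?_ hT
        intro s
        have := mul_neg_of_neg_of_pos (hneg s) (hfacpos s)
        linarith
      rw [intervalIntegral.integral_neg, hkey2, neg_zero] at hposI
      exact lt_irrefl 0 hposI
    · funext t
      have := hrepr t
      beta_reduce at this
      rw [hv0, zero_mul] at this
      exact sub_eq_zero.mp this
    · exfalso
      have hpos : ∀ s, 0 < w s - ustar s := by
        intro s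
        have := hrepr s
        beta_reduce at this
        rw [this]
        exact mul_pos hv0 (Real.exp_pos _)
      have hposI : 0 < ∫ s in (0:ℝ)..T, (w s - ustar s) * (b s + d s / (w s * ustar s)) :=
        intervalIntegral.intervalIntegral_pos_of_pos (hcontI.intervalIntegrable 0 T)
          (fun s => mul_pos (hpos s) (hfacpos s)) hT
      rw [hkey2] at hposI
      exact lt_irrefl 0 hposI
  · -- Attraction
    intro u hud' hu0
    have hud : ∀ t ∈ Set.Ici (0:ℝ), HasDerivWithinAt u (vf a b d t (u t)) (Set.Ici 0) t :=
      fun t ht => hud' t ht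
    have hnn : ∀ t ∈ Set.Ici (0:ℝ), 0 ≤ u t := by
      intro t ht
      refine stay_ge (t₀ := (0:ℝ)) (t₁ := t) (g := fun s => vf a b d s (u s))
        (fun s hs => (hud s hs.1).mono (fun z hz => hz.1))
        (fun s hs h => ?_) hu0 t ⟨ht, le_rfl⟩
      show 0 < vf a b d s (u s)
      rw [h]
      show 0 < 0 * (a s - b s * 0) + d s
      simpa using hdpos s
    have hucont : ContinuousOn u (Set.Ici 0) := fun t ht => (hud t ht).continuousWithinAt
    have huec : Continuous (fun t => u (max t 0)) :=
      hucont.comp_continuous (continuous_id.max continuous_const) (fun x => le_max_right x 0)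
    have hueeq : ∀ t : ℝ, 0 ≤ t → u (max t 0) = u t := fun t ht => by rw [max_eq_left ht]
    have hccc : Continuous (fun t => a t - b t * (u (max t 0) + ustar t)) :=
      hac.sub (hbc.mul (huec.add hustarc))
    have hvd : ∀ t ∈ Set.Ici (0:ℝ), HasDerivWithinAt (fun t => u t - ustar t)
        ((a t - b t * (u (max t 0) + ustar t)) * (u t - ustar t)) (Set.Ici 0) t := by
      intro t ht
      have h1 : HasDerivWithinAt (fun t => u t - ustar t) _ (Set.Ici 0) t :=
        (hud t ht).sub (hustard t).hasDerivWithinAt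
      convert h1 using 1
      show (a t - b t * (u (max t 0) + ustar t)) * (u t - ustar t)
        = vf a b d t (u t) - vf a b d t (ustar t)
      rw [hueeq t ht]
      unfold vf
      ring
    have hrepr := linear_ode_repr_right hccc hvd
    have hgc : Continuous (fun s => a s - b s * ustar s) := hac.sub (hbc.mul hustarc)
    have hgper : Function.Periodic (fun s => a s - b s * ustar s) T := by
      intro t
      simp only []
      rw [hap t, hbp t, hustarper t]
    have hint3 : IntervalIntegrable (fun s => d s / ustar s) MeasureTheory.volume 0 T :=
      (hdc.div hustarc (fun s => (hustarpos s).ne')).intervalIntegrable 0 T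
    have hgT : ∫ s in (0:ℝ)..T, (a s - b s * ustar s)
        = - ∫ s in (0:ℝ)..T, d s / ustar s := by
      have h1 := intervalIntegral.integral_add (hgc.intervalIntegrable 0 T) hint3
      have h2 : ∫ s in (0:ℝ)..T, ((a s - b s * ustar s) + d s / ustar s) = 0 := hIu
      rw [h2] at h1
      linarith [h1]
    have hdu_pos : 0 < ∫ s in (0:ℝ)..T, d s / ustar s :=
      intervalIntegral.intervalIntegral_pos_of_pos hint3 (fun s => div_pos (hdpos s) (hustarpos s)) hT
    have htendsto : Tendsto (fun t => ∫ s in (0:ℝ)..t, (a s - b s * ustar s)) atTop atBot := by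
      have hnegper : Function.Periodic (fun s => -(a s - b s * ustar s)) T := by
        intro t
        simp only [neg_inj]
        exact hgper t
      have h₀ : 0 < ∫ s in (0:ℝ)..T, -(a s - b s * ustar s) := by
        rw [intervalIntegral.integral_neg, hgT, neg_neg]
        exact hdu_pos
      have h1 := hnegper.tendsto_atTop_intervalIntegral_of_pos
        h₀ hT
      have h2 : (fun t => ∫ s in (0:ℝ)..t, -(a s - b s * ustar s))
          = fun t => -∫ s in (0:ℝ)..t, (a s - b s * ustar s) :=
        funext fun t => intervalIntegral.integral_neg
      rw [h2] at h1
      exact tendsto_neg_atTop_iff.mp h1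
    have hcomp : ∀ t : ℝ, 0 ≤ t →
        (∫ s in (0:ℝ)..t, (a s - b s * (u (max s 0) + ustar s)))
          ≤ ∫ s in (0:ℝ)..t, (a s - b s * ustar s) := by
      intro t ht
      apply intervalIntegral.integral_mono_on ht (hccc.intervalIntegrable 0 t)
        (hgc.intervalIntegrable 0 t)
      intro s hs
      have hs0 : (0:ℝ) ≤ s := hs.1
      rw [hueeq s hs0]
      have h4 := hnn s hs0
      have h5 := (hbpos s).le
      nlinarith [mul_nonneg h5 h4]
    have habs : ∀ᶠ t in atTop, ‖u t - ustar t‖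
        ≤ |u 0 - ustar 0| * Real.exp (∫ s in (0:ℝ)..t, (a s - b s * ustar s)) := by
      filter_upwards [eventually_ge_atTop (0:ℝ)] with t ht
      have h6 := hrepr t ht
      beta_reduce at h6
      rw [Real.norm_eq_abs, h6, abs_mul, Real.abs_exp]
      exact mul_le_mul_of_nonneg_left (Real.exp_le_exp.mpr (hcomp t ht)) (abs_nonneg _)
    have hlim : Tendsto (fun t => |u 0 - ustar 0|
        * Real.exp (∫ s in (0:ℝ)..t, (a s - b s * ustar s))) atTop (𝓝 0) := by
      have h7 := Real.tendsto_exp_atBot.comp htendsto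
      have h8 := h7.const_mul |u 0 - ustar 0|
      simpa using h8
    exact squeeze_zero_norm' habs hlim
end

section
/- Let T > 0, let a1, a2 : ℝ → ℝ be continuous and T-periodic, and let b1, b2, c1, c2, d1, d2 : ℝ → ℝ be continuous, T-periodic, and everywhere positive. Suppose (u⁻, v⁻) and (u⁺, v⁺) are two T-periodic solutions of the system u' = u(a1(t) − b1(t) u − c1(t) v) + d1(t), v' = v(a2(t) − b2(t) u − c2(t) v) + d2(t) with u⁻(t), v⁻(t), u⁺(t), v⁺(t) > 0, u⁻(t) < u⁺(t), and v⁻(t) > v⁺(t) for all t. Then b1_L · ∫₀ᵀ (u⁺(t) − u⁻(t)) dt < c1_M · ∫₀ᵀ (v⁻(t) − v⁺(t)) dt and c2_L · ∫₀ᵀ (v⁻(t) − v⁺(t)) dt < b2_M · ∫₀ᵀ (u⁺(t) − u⁻(t)) dt. -/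
open Filter Topology intervalIntegral

private lemma bdd_of_periodic (T : ℝ) (hT : 0 < T) (f : ℝ → ℝ) (hf : Continuous f)
    (hp : ∀ t, f (t + T) = f t) :
    BddBelow (Set.range f) ∧ BddAbove (Set.range f) := by
  have hper : Function.Periodic f T := hp
  have hsub : Set.range f ⊆ f '' Set.Icc 0 T := by
    rintro x ⟨s, rfl⟩
    obtain ⟨y, hy, hxy⟩ := hper.exists_mem_Ico₀ hT s
    exact ⟨y, Set.Ico_subset_Icc_self hy, hxy.symm⟩
  have hcomp : IsCompact (f '' Set.Icc 0 T) := (isCompact_Icc).image hf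
  exact ⟨hcomp.bddBelow.mono hsub, hcomp.bddAbove.mono hsub⟩

private lemma log_deriv_integral_zero (T : ℝ) (u g : ℝ → ℝ)
    (hu : ∀ t, HasDerivAt u (g t) t) (hg : Continuous g)
    (hpos : ∀ t, 0 < u t) (hper : u T = u 0) :
    ∫ t in (0:ℝ)..T, g t / u t = 0 := by
  have hucont : Continuous u := by
    have : Differentiable ℝ u := fun t => (hu t).differentiableAt
    exact this.continuous
  have hcont : Continuous (fun t => g t / u t) :=
    hg.div hucont (fun t => (hpos t).ne')
  have hlog : ∀ t ∈ Set.uIcc (0:ℝ) T, HasDerivAt (fun s => Real.log (u s)) (g t / u t) t :=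
    fun t _ => (hu t).log (hpos t).ne'
  rw [intervalIntegral.integral_eq_sub_of_hasDerivAt hlog (hcont.intervalIntegrable 0 T),
    hper, sub_self]

private lemma key_lt (T : ℝ) (hT : 0 < T)
    (a p q d : ℝ → ℝ) (hac : Continuous a) (hpc : Continuous p) (hqc : Continuous q)
    (hdc : Continuous d) (hdpos : ∀ t, 0 < d t)
    (wm wp zm zp : ℝ → ℝ) (hzmc : Continuous zm) (hzpc : Continuous zp)
    (hwm : ∀ t, HasDerivAt wm (wm t * (a t - p t * wm t - q t * zm t) + d t) t)
    (hwp : ∀ t, HasDerivAt wp (wp t * (a t - p t * wp t - q t * zp t) + d t) t)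
    (hwmpos : ∀ t, 0 < wm t) (hwppos : ∀ t, 0 < wp t)
    (hwmP : wm T = wm 0) (hwpP : wp T = wp 0)
    (hord : ∀ t, wm t < wp t) :
    ∫ t in (0:ℝ)..T, p t * (wp t - wm t) < ∫ t in (0:ℝ)..T, q t * (zm t - zp t) := by
  have hwmc : Continuous wm := by
    have : Differentiable ℝ wm := fun t => (hwm t).differentiableAt
    exact this.continuous
  have hwpc : Continuous wp := by
    have : Differentiable ℝ wp := fun t => (hwp t).differentiableAt
    exact this.continuous
  set gm : ℝ → ℝ := fun t => wm t * (a t - p t * wm t - q t * zm t) + d t with hgm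
  set gp : ℝ → ℝ := fun t => wp t * (a t - p t * wp t - q t * zp t) + d t with hgp
  have hgmc : Continuous gm :=
    (hwmc.mul ((hac.sub (hpc.mul hwmc)).sub (hqc.mul hzmc))).add hdc
  have hgpc : Continuous gp :=
    (hwpc.mul ((hac.sub (hpc.mul hwpc)).sub (hqc.mul hzpc))).add hdc
  have Im : ∫ t in (0:ℝ)..T, gm t / wm t = 0 :=
    log_deriv_integral_zero T wm gm hwm hgmc hwmpos hwmP
  have Ip : ∫ t in (0:ℝ)..T, gp t / wp t = 0 :=
    log_deriv_integral_zero T wp gp hwp hgpc hwppos hwpP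
  have hmc : Continuous (fun t => gm t / wm t) := hgmc.div hwmc fun t => (hwmpos t).ne'
  have hpcq : Continuous (fun t => gp t / wp t) := hgpc.div hwpc fun t => (hwppos t).ne'
  have key : ∫ t in (0:ℝ)..T, (gm t / wm t - gp t / wp t) = 0 := by
    rw [intervalIntegral.integral_sub (hmc.intervalIntegrable 0 T)
      (hpcq.intervalIntegrable 0 T), Im, Ip, sub_zero]
  set A : ℝ → ℝ := fun t => p t * (wp t - wm t) with hA
  set B : ℝ → ℝ := fun t => q t * (zm t - zp t) with hB
  set C : ℝ → ℝ := fun t => d t * (1 / wm t - 1 / wp t) with hC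
  have hAc : Continuous A := hpc.mul (hwpc.sub hwmc)
  have hBc : Continuous B := hqc.mul (hzmc.sub hzpc)
  have hCc : Continuous C := hdc.mul
    ((continuous_const.div hwmc fun t => (hwmpos t).ne').sub
     (continuous_const.div hwpc fun t => (hwppos t).ne'))
  have hptw : ∀ t, gm t / wm t - gp t / wp t = A t - B t + C t := by
    intro t
    have h1 : wm t ≠ 0 := (hwmpos t).ne'
    have h2 : wp t ≠ 0 := (hwppos t).ne'
    simp only [hgm, hgp, hA, hB, hC]
    field_simp
    ring
  have key2 : ∫ t in (0:ℝ)..T, (A t - B t + C t) = 0 := by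
    have heq : ∫ t in (0:ℝ)..T, (A t - B t + C t)
        = ∫ t in (0:ℝ)..T, (gm t / wm t - gp t / wp t) :=
      intervalIntegral.integral_congr fun t _ => (hptw t).symm
    rw [heq]; exact key
  have hsplit : (∫ t in (0:ℝ)..T, A t) - (∫ t in (0:ℝ)..T, B t) + (∫ t in (0:ℝ)..T, C t)
      = 0 := by
    rw [← intervalIntegral.integral_sub (hAc.intervalIntegrable 0 T)
      (hBc.intervalIntegrable 0 T),
      ← intervalIntegral.integral_add (f := fun x => A x - B x) ((hAc.sub hBc).intervalIntegrable 0 T)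
      (hCc.intervalIntegrable 0 T)]
    exact key2
  have hCpos : 0 < ∫ t in (0:ℝ)..T, C t := by
    apply intervalIntegral.intervalIntegral_pos_of_pos (hCc.intervalIntegrable 0 T) _ hT
    intro t
    have := one_div_lt_one_div_of_lt (hwmpos t) (hord t)
    have := hdpos t
    simp only [hC]
    nlinarith
  linarith

private lemma scale_lt (T : ℝ) (hT : 0 < T) (p q X Y : ℝ → ℝ)
    (hpc : Continuous p) (hqc : Continuous q)
    (hpP : ∀ t, p (t + T) = p t) (hqP : ∀ t, q (t + T) = q t)
    (hXc : Continuous X) (hYc : Continuous Y)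
    (hXpos : ∀ t, 0 ≤ X t) (hYpos : ∀ t, 0 ≤ Y t)
    (h : (∫ t in (0:ℝ)..T, p t * X t) < ∫ t in (0:ℝ)..T, q t * Y t) :
    (⨅ t, p t) * (∫ t in (0:ℝ)..T, X t) < (⨆ t, q t) * ∫ t in (0:ℝ)..T, Y t := by
  have hpb := (bdd_of_periodic T hT p hpc hpP).1
  have hqb := (bdd_of_periodic T hT q hqc hqP).2
  have h1 : (⨅ t, p t) * (∫ t in (0:ℝ)..T, X t) ≤ ∫ t in (0:ℝ)..T, p t * X t := by
    rw [← intervalIntegral.integral_const_mul]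
    apply intervalIntegral.integral_mono_on hT.le
      ((continuous_const.mul hXc).intervalIntegrable 0 T)
      ((hpc.mul hXc).intervalIntegrable 0 T)
    intro t _
    exact mul_le_mul_of_nonneg_right (ciInf_le hpb t) (hXpos t)
  have h2 : (∫ t in (0:ℝ)..T, q t * Y t) ≤ (⨆ t, q t) * ∫ t in (0:ℝ)..T, Y t := by
    rw [← intervalIntegral.integral_const_mul]
    apply intervalIntegral.integral_mono_on hT.le
      ((hqc.mul hYc).intervalIntegrable 0 T)
      ((continuous_const.mul hYc).intervalIntegrable 0 T)
    intro t _
    exact mul_le_mul_of_nonneg_right (le_ciSup hqb t) (hYpos t)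
  linarith

theorem integral_inequalities_for_ordered_periodic_solutions
    (T : ℝ) (hT : 0 < T)
    (a1 a2 b1 b2 c1 c2 d1 d2 : ℝ → ℝ)
    (ha1c : Continuous a1) (ha2c : Continuous a2)
    (hb1c : Continuous b1) (hb2c : Continuous b2)
    (hc1c : Continuous c1) (hc2c : Continuous c2)
    (hd1c : Continuous d1) (hd2c : Continuous d2)
    (ha1p : ∀ t, a1 (t + T) = a1 t) (ha2p : ∀ t, a2 (t + T) = a2 t)
    (hb1p : ∀ t, b1 (t + T) = b1 t) (hb2p : ∀ t, b2 (t + T) = b2 t)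
    (hc1p : ∀ t, c1 (t + T) = c1 t) (hc2p : ∀ t, c2 (t + T) = c2 t)
    (hd1p : ∀ t, d1 (t + T) = d1 t) (hd2p : ∀ t, d2 (t + T) = d2 t)
    (hb1pos : ∀ t, 0 < b1 t) (hb2pos : ∀ t, 0 < b2 t)
    (hc1pos : ∀ t, 0 < c1 t) (hc2pos : ∀ t, 0 < c2 t)
    (hd1pos : ∀ t, 0 < d1 t) (hd2pos : ∀ t, 0 < d2 t)
    (um vm up vp : ℝ → ℝ)
    (hum : ∀ t, HasDerivAt um (um t * (a1 t - b1 t * um t - c1 t * vm t) + d1 t) t)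
    (hvm : ∀ t, HasDerivAt vm (vm t * (a2 t - b2 t * um t - c2 t * vm t) + d2 t) t)
    (hup : ∀ t, HasDerivAt up (up t * (a1 t - b1 t * up t - c1 t * vp t) + d1 t) t)
    (hvp : ∀ t, HasDerivAt vp (vp t * (a2 t - b2 t * up t - c2 t * vp t) + d2 t) t)
    (humP : ∀ t, um (t + T) = um t) (hvmP : ∀ t, vm (t + T) = vm t)
    (hupP : ∀ t, up (t + T) = up t) (hvpP : ∀ t, vp (t + T) = vp t)
    (humpos : ∀ t, 0 < um t) (hvmpos : ∀ t, 0 < vm t)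
    (huppos : ∀ t, 0 < up t) (hvppos : ∀ t, 0 < vp t)
    (horder1 : ∀ t, um t < up t) (horder2 : ∀ t, vp t < vm t) :
    (⨅ t, b1 t) * (∫ t in (0:ℝ)..T, (up t - um t)) <
      (⨆ t, c1 t) * (∫ t in (0:ℝ)..T, (vm t - vp t)) ∧
    (⨅ t, c2 t) * (∫ t in (0:ℝ)..T, (vm t - vp t)) <
      (⨆ t, b2 t) * (∫ t in (0:ℝ)..T, (up t - um t)) := by
  have humc : Continuous um := by
    have : Differentiable ℝ um := fun t => (hum t).differentiableAt
    exact this.continuous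
  have hvmc : Continuous vm := by
    have : Differentiable ℝ vm := fun t => (hvm t).differentiableAt
    exact this.continuous
  have hupc : Continuous up := by
    have : Differentiable ℝ up := fun t => (hup t).differentiableAt
    exact this.continuous
  have hvpc : Continuous vp := by
    have : Differentiable ℝ vp := fun t => (hvp t).differentiableAt
    exact this.continuous
  have humT : um T = um 0 := by have := humP 0; rwa [zero_add] at this
  have hupT : up T = up 0 := by have := hupP 0; rwa [zero_add] at this
  have hvmT : vm T = vm 0 := by have := hvmP 0; rwa [zero_add] at this
  have hvpT : vp T = vp 0 := by have := hvpP 0; rwa [zero_add] at this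
  constructor
  · apply scale_lt T hT b1 c1 _ _ hb1c hc1c hb1p hc1p (hupc.sub humc) (hvmc.sub hvpc)
      (fun t => sub_nonneg.2 (horder1 t).le) (fun t => sub_nonneg.2 (horder2 t).le)
    exact key_lt T hT a1 b1 c1 d1 ha1c hb1c hc1c hd1c hd1pos um up vm vp hvmc hvpc
      hum hup humpos huppos humT hupT horder1
  · apply scale_lt T hT c2 b2 _ _ hc2c hb2c hc2p hb2p (hvmc.sub hvpc) (hupc.sub humc)
      (fun t => sub_nonneg.2 (horder2 t).le) (fun t => sub_nonneg.2 (horder1 t).le)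
    refine key_lt T hT a2 c2 b2 d2 ha2c hc2c hb2c hd2c hd2pos vp vm up um hupc humc
      (fun t => ?_) (fun t => ?_) hvppos hvmpos hvpT hvmT horder2
    · have h := hvp t; convert h using 1; ring
    · have h := hvm t; convert h using 1; ring
end

section
/- Let (u, v) be a solution of system (N) on [0, τ) for some τ > 0. If u(0,x) ≥ 0 and v(0,x) ≥ 0 for all x ∈ D̄, then u(t,x) ≥ 0 and v(t,x) ≥ 0 for all t ∈ [0, τ) and x ∈ D̄. -/
open MeasureTheory Filter Topology

noncomputable section

/-- A solution of the Neumann-type nonlocal dispersal competition system on the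
time interval `I`. -/
def IsSolN (N : ℕ) (D : Set (EuclideanSpace ℝ (Fin N)))
    (κ : EuclideanSpace ℝ (Fin N) → ℝ) (ν1 ν2 : ℝ)
    (a1 a2 b1 b2 c1 c2 : ℝ → EuclideanSpace ℝ (Fin N) → ℝ)
    (I : Set ℝ) (u v : ℝ → EuclideanSpace ℝ (Fin N) → ℝ) : Prop :=
  ContinuousOn (fun p : ℝ × EuclideanSpace ℝ (Fin N) => u p.1 p.2) (I ×ˢ closure D) ∧
  ContinuousOn (fun p : ℝ × EuclideanSpace ℝ (Fin N) => v p.1 p.2) (I ×ˢ closure D) ∧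
  (∀ t ∈ I, ∀ x ∈ closure D,
    HasDerivWithinAt (fun s => u s x)
      (ν1 * (∫ y in D, κ (y - x) * (u t y - u t x)) +
        u t x * (a1 t x - b1 t x * u t x - c1 t x * v t x)) I t ∧
    HasDerivWithinAt (fun s => v s x)
      (ν2 * (∫ y in D, κ (y - x) * (v t y - v t x)) +
        v t x * (a2 t x - b2 t x * u t x - c2 t x * v t x)) I t)

/-- The infimum of a function of `(t, x)` over `ℝ × S`. -/
def infTD (N : ℕ) (f : ℝ → EuclideanSpace ℝ (Fin N) → ℝ)
    (S : Set (EuclideanSpace ℝ (Fin N))) : ℝ :=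
  sInf (Set.image2 f Set.univ S)

/-- The supremum of a function of `(t, x)` over `ℝ × S`. -/
def supTD (N : ℕ) (f : ℝ → EuclideanSpace ℝ (Fin N) → ℝ)
    (S : Set (EuclideanSpace ℝ (Fin N))) : ℝ :=
  sSup (Set.image2 f Set.univ S)

lemma deriv_nonpos_of_left (f : ℝ → ℝ) (d τ t0 : ℝ) (h0 : 0 < t0) (hτ : t0 < τ)
    (hf : HasDerivWithinAt f d (Set.Ico 0 τ) t0)
    (hpos : ∀ s ∈ Set.Ico (0:ℝ) t0, 0 < f s) (hft0 : f t0 = 0) : d ≤ 0 := by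
  have hsub : Set.Ico (0:ℝ) t0 ⊆ Set.Ico 0 τ := Set.Ico_subset_Ico le_rfl hτ.le
  have hf' : HasDerivWithinAt f d (Set.Ico 0 t0) t0 := hf.mono hsub
  rw [hasDerivWithinAt_iff_tendsto_slope] at hf'
  have hdiff : Set.Ico (0:ℝ) t0 \ {t0} = Set.Ico 0 t0 := by
    apply Set.diff_singleton_eq_self; simp
  rw [hdiff] at hf'
  have hne : (𝓝[Set.Ico (0:ℝ) t0] t0).NeBot := by
    rw [← mem_closure_iff_nhdsWithin_neBot, closure_Ico h0.ne]
    exact Set.right_mem_Icc.2 h0.le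
  refine le_of_tendsto hf' ?_
  filter_upwards [self_mem_nhdsWithin] with s hs
  rw [slope_def_field, hft0]
  have h1 : (0:ℝ) ≤ f s := (hpos s hs).le
  have h2 : s - t0 ≤ 0 := by linarith [hs.2]
  rw [sub_zero]
  exact div_nonpos_of_nonneg_of_nonpos h1 h2

set_option maxHeartbeats 1000000 in
theorem positivity_neumann
    (N : ℕ) (hN : 1 ≤ N)
    (D : Set (EuclideanSpace ℝ (Fin N)))
    (hDo : IsOpen D) (hDne : D.Nonempty) (hDbd : Bornology.IsBounded D)
    (κ : EuclideanSpace ℝ (Fin N) → ℝ) (hκc : Continuous κ)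
    (r : ℝ) (hr : 0 < r)
    (hκpos : ∀ z, ‖z‖ < r → 0 < κ z)
    (hκsupp : ∀ z, r ≤ ‖z‖ → κ z = 0)
    (hκsymm : ∀ z, κ (-z) = κ z)
    (hκint : (∫ z, κ z) = 1)
    (T : ℝ) (hT : 0 < T)
    (ν1 ν2 : ℝ) (hν1 : 0 < ν1) (hν2 : 0 < ν2)
    (a1 a2 b1 b2 c1 c2 : ℝ → EuclideanSpace ℝ (Fin N) → ℝ)
    (hc : ∀ f ∈ [a1, a2, b1, b2, c1, c2],
      ContinuousOn (fun p : ℝ × EuclideanSpace ℝ (Fin N) => f p.1 p.2)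
        ((Set.univ : Set ℝ) ×ˢ closure D))
    (hpos : ∀ f ∈ [a1, a2, b1, b2, c1, c2], ∀ t, ∀ x ∈ closure D, 0 < f t x)
    (hper : ∀ f ∈ [a1, a2, b1, b2, c1, c2], ∀ t x, f (t + T) x = f t x)
    (τ : ℝ) (hτ : 0 < τ)
    (u v : ℝ → EuclideanSpace ℝ (Fin N) → ℝ)
    (hsol : IsSolN N D κ ν1 ν2 a1 a2 b1 b2 c1 c2 (Set.Ico 0 τ) u v)
    (hu0 : ∀ x ∈ closure D, 0 ≤ u 0 x)
    (hv0 : ∀ x ∈ closure D, 0 ≤ v 0 x) :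
    ∀ t ∈ Set.Ico (0:ℝ) τ, ∀ x ∈ closure D, 0 ≤ u t x ∧ 0 ≤ v t x := by
  obtain ⟨hu, hv, hder⟩ := hsol
  have hκnn : ∀ z, 0 ≤ κ z := by
    intro z
    by_cases hz : ‖z‖ < r
    · exact (hκpos z hz).le
    · rw [hκsupp z (le_of_not_gt hz)]
  have hDcne : (closure D).Nonempty := hDne.closure
  have hDccp : IsCompact (closure D) := hDbd.isCompact_closure
  by_contra hcon
  push_neg at hcon
  obtain ⟨t1, ht1, x1, hx1, hneg⟩ := hcon
  have hmin : min (u t1 x1) (v t1 x1) < 0 := by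
    by_cases hcase : 0 ≤ u t1 x1
    · exact lt_of_le_of_lt (min_le_right _ _) (hneg hcase)
    · exact lt_of_le_of_lt (min_le_left _ _) (lt_of_not_ge hcase)
  set Q : Set (ℝ × EuclideanSpace ℝ (Fin N)) := Set.Icc 0 t1 ×ˢ closure D with hQdef
  have hQsub : Q ⊆ Set.Ico 0 τ ×ˢ closure D :=
    Set.prod_mono (fun s hs => ⟨hs.1, lt_of_le_of_lt hs.2 ht1.2⟩) subset_rfl
  have hQu : Q ⊆ (Set.univ : Set ℝ) ×ˢ closure D :=
    Set.prod_mono (Set.subset_univ _) subset_rfl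
  have hQcp : IsCompact Q := isCompact_Icc.prod hDccp
  -- bounds on the reaction terms
  set F1 : ℝ × EuclideanSpace ℝ (Fin N) → ℝ :=
    fun p => a1 p.1 p.2 - b1 p.1 p.2 * u p.1 p.2 - c1 p.1 p.2 * v p.1 p.2 with hF1def
  set F2 : ℝ × EuclideanSpace ℝ (Fin N) → ℝ :=
    fun p => a2 p.1 p.2 - b2 p.1 p.2 * u p.1 p.2 - c2 p.1 p.2 * v p.1 p.2 with hF2def
  have hF1c : ContinuousOn F1 Q :=
    ((((hc a1 (by simp)).mono hQu).sub
      (((hc b1 (by simp)).mono hQu).mul (hu.mono hQsub))).sub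
      (((hc c1 (by simp)).mono hQu).mul (hv.mono hQsub)))
  have hF2c : ContinuousOn F2 Q :=
    ((((hc a2 (by simp)).mono hQu).sub
      (((hc b2 (by simp)).mono hQu).mul (hu.mono hQsub))).sub
      (((hc c2 (by simp)).mono hQu).mul (hv.mono hQsub)))
  obtain ⟨M1, hM1⟩ := hQcp.exists_bound_of_continuousOn hF1c
  obtain ⟨M2, hM2⟩ := hQcp.exists_bound_of_continuousOn hF2c
  set M : ℝ := max M1 M2 with hMdef
  have hM : ∀ p ∈ Q, |F1 p| ≤ M ∧ |F2 p| ≤ M := by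
    intro p hp
    constructor
    · exact le_trans (by simpa [Real.norm_eq_abs] using hM1 p hp) (le_max_left _ _)
    · exact le_trans (by simpa [Real.norm_eq_abs] using hM2 p hp) (le_max_right _ _)
  set K : ℝ := M + 1 with hKdef
  set δ : ℝ := -(min (u t1 x1) (v t1 x1)) / (2 * Real.exp (K * t1)) with hδdef
  have hδ : 0 < δ := div_pos (by linarith) (by positivity)
  set g : ℝ → EuclideanSpace ℝ (Fin N) → ℝ :=
    fun t x => u t x + δ * Real.exp (K * t) with hgdef
  set h : ℝ → EuclideanSpace ℝ (Fin N) → ℝ :=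
    fun t x => v t x + δ * Real.exp (K * t) with hhdef
  set φ : ℝ × EuclideanSpace ℝ (Fin N) → ℝ :=
    fun p => min (g p.1 p.2) (h p.1 p.2) with hφdef
  have hexpc : Continuous (fun p : ℝ × EuclideanSpace ℝ (Fin N) => δ * Real.exp (K * p.1)) :=
    continuous_const.mul (Real.continuous_exp.comp (continuous_const.mul continuous_fst))
  have hφc : ContinuousOn φ Q :=
    ((hu.mono hQsub).add hexpc.continuousOn).inf ((hv.mono hQsub).add hexpc.continuousOn)
  set C : Set (ℝ × EuclideanSpace ℝ (Fin N)) := Q ∩ φ ⁻¹' Set.Iic 0 with hCdef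
  have hCc : IsClosed C := hφc.preimage_isClosed_of_isClosed hQcp.isClosed isClosed_Iic
  have hCcp : IsCompact C := hQcp.of_isClosed_subset hCc Set.inter_subset_left
  set A : Set ℝ := Prod.fst '' C with hAdef
  have hAcp : IsCompact A := hCcp.image continuous_fst
  have hδexp : δ * Real.exp (K * t1) = -(min (u t1 x1) (v t1 x1)) / 2 := by
    rw [hδdef]
    field_simp
  have ht1A : t1 ∈ A := by
    refine ⟨(t1, x1), ⟨⟨⟨ht1.1, le_rfl⟩, hx1⟩, ?_⟩, rfl⟩
    show φ (t1, x1) ≤ 0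
    have : φ (t1, x1) = min (u t1 x1) (v t1 x1) + δ * Real.exp (K * t1) := by
      simp only [hφdef, hgdef, hhdef]
      rw [min_add_add_right]
    rw [this, hδexp]
    linarith
  have hAne : A.Nonempty := ⟨t1, ht1A⟩
  set t0 : ℝ := sInf A with ht0def
  have ht0A : t0 ∈ A := hAcp.sInf_mem hAne
  obtain ⟨p, hpC, hp1⟩ := ht0A
  have hxwDc : p.2 ∈ closure D := hpC.1.2
  have hφw : φ (t0, p.2) ≤ 0 := by
    have := hpC.2
    rw [Set.mem_preimage, Set.mem_Iic] at this
    rwa [← hp1]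
  have ht0Icc : t0 ∈ Set.Icc (0:ℝ) t1 := hp1 ▸ hpC.1.1
  have ht0Ico : t0 ∈ Set.Ico (0:ℝ) τ := ⟨ht0Icc.1, lt_of_le_of_lt ht0Icc.2 ht1.2⟩
  -- before t0, everything is positive
  have hbefore : ∀ s ∈ Set.Ico (0:ℝ) t0, ∀ x ∈ closure D, 0 < g s x ∧ 0 < h s x := by
    intro s hs x hx
    have hsA : s ∉ A := fun hmem =>
      absurd (csInf_le hAcp.bddBelow hmem) (not_le.2 hs.2)
    have hsQ : (s, x) ∈ Q := ⟨⟨hs.1, le_trans hs.2.le ht0Icc.2⟩, hx⟩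
    have hnC : (s, x) ∉ C := fun hmem => hsA ⟨(s, x), hmem, rfl⟩
    have : ¬ φ (s, x) ≤ 0 := fun hle => hnC ⟨hsQ, Set.mem_preimage.2 (Set.mem_Iic.2 hle)⟩
    have hφpos : 0 < min (g s x) (h s x) := lt_of_not_ge this
    exact ⟨lt_of_lt_of_le hφpos (min_le_left _ _), lt_of_lt_of_le hφpos (min_le_right _ _)⟩
  -- t0 is positive
  have ht0pos : 0 < t0 := by
    rcases ht0Icc.1.lt_or_eq with hlt | heq
    · exact hlt
    · exfalso
      have h1 : 0 < g t0 p.2 := by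
        simp only [hgdef, ← heq]
        have := hu0 p.2 hxwDc
        have := Real.exp_pos (K * 0)
        nlinarith
      have h2 : 0 < h t0 p.2 := by
        simp only [hhdef, ← heq]
        have := hv0 p.2 hxwDc
        have := Real.exp_pos (K * 0)
        nlinarith
      have : 0 < φ (t0, p.2) := lt_min h1 h2
      linarith
  -- at time t0, everything is still nonnegative (by left continuity)
  have hne0 : (𝓝[Set.Ico (0:ℝ) t0] t0).NeBot := by
    rw [← mem_closure_iff_nhdsWithin_neBot, closure_Ico ht0pos.ne]
    exact Set.right_mem_Icc.2 ht0pos.le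
  have hsubIco : Set.Ico (0:ℝ) t0 ⊆ Set.Ico 0 τ := Set.Ico_subset_Ico le_rfl ht0Ico.2.le
  have hg0 : ∀ x ∈ closure D, 0 ≤ g t0 x ∧ 0 ≤ h t0 x := by
    intro x hx
    have hexpct : Continuous (fun s : ℝ => δ * Real.exp (K * s)) :=
      continuous_const.mul (Real.continuous_exp.comp (continuous_const.mul continuous_id))
    constructor
    · have hcw : ContinuousWithinAt (fun s => g s x) (Set.Ico 0 t0) t0 :=
        (((hder t0 ht0Ico x hx).1.continuousWithinAt).add
          hexpct.continuousWithinAt).mono hsubIco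
      refine ge_of_tendsto hcw ?_
      filter_upwards [self_mem_nhdsWithin] with s hs
      exact (hbefore s hs x hx).1.le
    · have hcw : ContinuousWithinAt (fun s => h s x) (Set.Ico 0 t0) t0 :=
        (((hder t0 ht0Ico x hx).2.continuousWithinAt).add
          hexpct.continuousWithinAt).mono hsubIco
      refine ge_of_tendsto hcw ?_
      filter_upwards [self_mem_nhdsWithin] with s hs
      exact (hbefore s hs x hx).2.le
  -- minimizer at time t0
  have hφt0c : ContinuousOn (fun x => φ (t0, x)) (closure D) := by
    refine hφc.comp (Continuous.continuousOn (continuous_const.prodMk continuous_id)) ?_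
    intro x hx
    exact ⟨ht0Icc, hx⟩
  obtain ⟨x0, hx0, hmin0⟩ := hDccp.exists_isMinOn hDcne hφt0c
  have hφx0 : φ (t0, x0) ≤ 0 := le_trans (hmin0 hxwDc) hφw
  have hx0cases : g t0 x0 ≤ 0 ∨ h t0 x0 ≤ 0 := min_le_iff.1 hφx0
  -- the key contradiction
  have key : ∀ (w : ℝ → EuclideanSpace ℝ (Fin N) → ℝ) (ν F : ℝ), 0 < ν →
      (∀ s ∈ Set.Ico (0:ℝ) t0, 0 < w s x0 + δ * Real.exp (K * s)) →
      w t0 x0 + δ * Real.exp (K * t0) = 0 →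
      (∀ y ∈ closure D, w t0 x0 ≤ w t0 y) →
      |F| ≤ M →
      HasDerivWithinAt (fun s => w s x0)
        (ν * (∫ y in D, κ (y - x0) * (w t0 y - w t0 x0)) + w t0 x0 * F)
        (Set.Ico 0 τ) t0 → False := by
    intro w ν F hν hposs hzero hminw hF hderw
    set E : ℝ := δ * Real.exp (K * t0) with hEdef
    have hEpos : 0 < E := mul_pos hδ (Real.exp_pos _)
    have hwx0 : w t0 x0 = -E := by linarith
    have hexp : HasDerivAt (fun s : ℝ => δ * Real.exp (K * s))
        (δ * (Real.exp (K * t0) * (K * 1))) t0 :=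
      (((hasDerivAt_id t0).const_mul K).exp).const_mul δ
    set I : ℝ := ∫ y in D, κ (y - x0) * (w t0 y - w t0 x0) with hIdef
    have hItg : 0 ≤ I :=
      setIntegral_nonneg hDo.measurableSet (fun y hy =>
        mul_nonneg (hκnn _) (sub_nonneg.2 (hminw y (subset_closure hy))))
    have hd := hderw.add hexp.hasDerivWithinAt
    have hd0 : ν * I + w t0 x0 * F + δ * (Real.exp (K * t0) * (K * 1)) ≤ 0 :=
      deriv_nonpos_of_left _ _ τ t0 ht0pos ht0Ico.2 hd hposs hzero
    have hFM : F ≤ M := le_of_abs_le hF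
    have h1 : -(E * M) ≤ w t0 x0 * F := by
      rw [hwx0]
      nlinarith
    have h2 : 0 ≤ ν * I := mul_nonneg hν.le hItg
    have h3 : δ * (Real.exp (K * t0) * (K * 1)) = E * K := by
      rw [hEdef]; ring
    nlinarith [hEpos]
  rcases hx0cases with hcase | hcase
  · have hgz : u t0 x0 + δ * Real.exp (K * t0) = 0 :=
      le_antisymm hcase (hg0 x0 hx0).1
    refine key u ν1 (a1 t0 x0 - b1 t0 x0 * u t0 x0 - c1 t0 x0 * v t0 x0) hν1
      (fun s hs => (hbefore s hs x0 hx0).1) hgz ?_ ?_ (hder t0 ht0Ico x0 hx0).1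
    · intro y hy
      have := (hg0 y hy).1
      simp only [hgdef] at this
      linarith
    · exact (hM (t0, x0) ⟨ht0Icc, hx0⟩).1
  · have hhz : v t0 x0 + δ * Real.exp (K * t0) = 0 :=
      le_antisymm hcase (hg0 x0 hx0).2
    refine key v ν2 (a2 t0 x0 - b2 t0 x0 * u t0 x0 - c2 t0 x0 * v t0 x0) hν2
      (fun s hs => (hbefore s hs x0 hx0).2) hhz ?_ ?_ (hder t0 ht0Ico x0 hx0).2
    · intro y hy
      have := (hg0 y hy).2
      simp only [hhdef] at this
      linarith
    · exact (hM (t0, x0) ⟨ht0Icc, hx0⟩).2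
end
end
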